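/- (LH+ model, n = 1 case of Proposition 1) With a single large loan, the loss exceedance probability satisfies P(L > α) = Φ(A(α,0)) − P(V ≤ A(α,0), X_1 ≤ c_0) + P(V ≤ A(α,1), X_1 ≤ c_0), where the joint probabilities equal the bivariate standard normal distribution function with correlation √ρ_0 evaluated at the respective arguments. -/

import Mathlib

open MeasureTheory ProbabilityTheory
open scoped ENNReal NNReal

/-- The standard normal cumulative distribution function `Φ`. -/
noncomputable def Phi (x : ℝ) : ℝ := (gaussianReal 0 1 (Set.Iic x)).toReal

/-- The inverse of the standard normal cdf. -/
noncomputable def PhiInv : ℝ → ℝ := Function.invFun Phi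

/-- The standard normal cdf extended to the extended reals, `Φ(−∞) = 0`, `Φ(+∞) = 1`. -/
noncomputable def PhiE (a : EReal) : ℝ :=
  if a = ⊤ then 1 else if a = ⊥ then 0 else Phi a.toReal

/-- The bivariate standard normal distribution function with correlation `r`, with the
first argument in the extended reals:
`Φ₂(a, y; r) = ∫_{v ≤ a} Φ((y − r·v)/√(1−r²)) φ(v) dv`. -/
noncomputable def Phi2 (a : EReal) (y r : ℝ) : ℝ :=
  ∫ v in {v : ℝ | (v : EReal) ≤ a},
    Phi ((y - r * v) / Real.sqrt (1 - r ^ 2)) * gaussianPDFReal 0 1 v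

/-- The threshold `A(α,k)` of the LH++/LH+ model, in the extended reals, with the
conventions `Φ⁻¹(0) = −∞` (so `A = +∞`) and `Φ⁻¹(1) = +∞` (so `A = −∞`). -/
noncomputable def Athr (c ρ N R N0 R0 α : ℝ) (k : ℕ) : EReal :=
  if max 0 (min 1 ((α - k * N0 * (1 - R0)) / (N * (1 - R)))) ≤ 0 then ⊤
  else if 1 ≤ max 0 (min 1 ((α - k * N0 * (1 - R0)) / (N * (1 - R)))) then ⊥
  else ((c - Real.sqrt (1 - ρ) *
      PhiInv (max 0 (min 1 ((α - k * N0 * (1 - R0)) / (N * (1 - R)))))) / Real.sqrt ρ : ℝ)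

instance : NullSingletonClass (gaussianReal 0 1) :=
  ⟨fun x => (gaussianReal_absolutelyContinuous 0 one_ne_zero) (measure_singleton x)⟩

lemma Phi_eq_integral (x : ℝ) : Phi x = ∫ t in Set.Iic x, gaussianPDFReal 0 1 t := by
  rw [Phi, gaussianReal_apply_eq_integral 0 one_ne_zero,
    ENNReal.toReal_ofReal (setIntegral_nonneg measurableSet_Iic
      fun t _ => gaussianPDFReal_nonneg 0 1 t)]

lemma gaussian_Iic_eq (x : ℝ) : gaussianReal 0 1 (Set.Iic x) = ENNReal.ofReal (Phi x) := by
  rw [Phi, ENNReal.ofReal_toReal (measure_ne_top _ _)]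

lemma Phi_strictMono : StrictMono Phi := by
  intro x y hxy
  rw [Phi_eq_integral, Phi_eq_integral]
  have h1 : Set.Iic y = Set.Iic x ∪ Set.Ioc x y := (Set.Iic_union_Ioc_eq_Iic hxy.le).symm
  rw [h1, setIntegral_union (Set.Iic_disjoint_Ioc le_rfl) measurableSet_Ioc
    ((integrable_gaussianPDFReal 0 1).integrableOn) ((integrable_gaussianPDFReal 0 1).integrableOn)]
  have hpos : 0 < ∫ t in Set.Ioc x y, gaussianPDFReal 0 1 t := by
    rw [← intervalIntegral.integral_of_le hxy.le]
    exact intervalIntegral.intervalIntegral_pos_of_pos_on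
      ((integrable_gaussianPDFReal 0 1).intervalIntegrable)
      (fun t _ => gaussianPDFReal_pos 0 1 t one_ne_zero) hxy
  linarith

lemma Phi_nonneg (x : ℝ) : 0 ≤ Phi x := ENNReal.toReal_nonneg

lemma Phi_le_one (x : ℝ) : Phi x ≤ 1 := by
  rw [Phi]
  exact ENNReal.toReal_le_of_le_ofReal one_pos.le (by simpa using prob_le_one)

lemma Phi_pos (x : ℝ) : 0 < Phi x := lt_of_le_of_lt (Phi_nonneg (x - 1)) (Phi_strictMono (by linarith))

lemma Phi_lt_one (x : ℝ) : Phi x < 1 := lt_of_lt_of_le (Phi_strictMono (show x < x + 1 by linarith)) (Phi_le_one (x + 1))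

lemma Phi_continuous : Continuous Phi := by
  have h : ∀ x, Phi x = (∫ t in (0:ℝ)..x, gaussianPDFReal 0 1 t) + Phi 0 := by
    intro x
    have := intervalIntegral.integral_Iic_sub_Iic
      ((integrable_gaussianPDFReal 0 1).integrableOn)
      ((integrable_gaussianPDFReal 0 1).integrableOn) (a := 0) (b := x)
    rw [Phi_eq_integral, Phi_eq_integral]
    linarith
  rw [show Phi = _ from funext h]
  exact ((integrable_gaussianPDFReal 0 1).continuous_primitive 0).add continuous_const

lemma Phi_tendsto_atTop : Filter.Tendsto Phi Filter.atTop (nhds 1) := by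
  have h := tendsto_measure_Iic_atTop (gaussianReal 0 1)
  rw [measure_univ] at h
  have h2 := (ENNReal.tendsto_toReal (by simp : (1:ℝ≥0∞) ≠ ⊤)).comp h
  exact (by simpa [Function.comp_def] using h2 :
    Filter.Tendsto (fun x => ((gaussianReal 0 1) (Set.Iic x)).toReal) Filter.atTop (nhds 1))

lemma Phi_tendsto_atBot : Filter.Tendsto Phi Filter.atBot (nhds 0) := by
  have hne : ∀ x : ℝ, Phi x = 1 - (gaussianReal 0 1 (Set.Ici x)).toReal := by
    intro x
    have h1 : gaussianReal 0 1 (Set.Iic x) + gaussianReal 0 1 (Set.Ioi x) = 1 := by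
      rw [← measure_union (Set.Iic_disjoint_Ioi le_rfl) measurableSet_Ioi,
        Set.Iic_union_Ioi, measure_univ]
    have h2 : gaussianReal 0 1 (Set.Ioi x) = gaussianReal 0 1 (Set.Ici x) :=
      measure_congr (Ioi_ae_eq_Ici)
    rw [Phi, eq_sub_iff_add_eq, ← ENNReal.toReal_add (measure_ne_top _ _) (measure_ne_top _ _),
      ← h2, h1, ENNReal.toReal_one]
  rw [show Phi = _ from funext hne]
  have h := tendsto_measure_Ici_atBot (gaussianReal 0 1)
  rw [measure_univ] at h
  have h2 := (ENNReal.tendsto_toReal (by simp : (1:ℝ≥0∞) ≠ ⊤)).comp h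
  simp only [Function.comp_def, ENNReal.toReal_one] at h2
  have := (tendsto_const_nhds (x := (1:ℝ)) (f := Filter.atBot (α := ℝ))).sub h2
  simpa using this

lemma Phi_surj {t : ℝ} (ht : t ∈ Set.Ioo (0:ℝ) 1) : ∃ x, Phi x = t := by
  obtain ⟨b, hb⟩ := (Phi_tendsto_atTop.eventually (eventually_gt_nhds ht.2)).exists
  obtain ⟨a, ha⟩ := (Phi_tendsto_atBot.eventually (eventually_lt_nhds ht.1)).exists
  have hab : a ≤ b := le_of_lt (Phi_strictMono.lt_iff_lt.mp (lt_trans ha hb))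
  obtain ⟨x, _, hx⟩ := intermediate_value_Icc hab Phi_continuous.continuousOn
    (Set.mem_Icc.mpr ⟨ha.le, hb.le⟩)
  exact ⟨x, hx⟩

lemma Phi_PhiInv {t : ℝ} (ht : t ∈ Set.Ioo (0:ℝ) 1) : Phi (PhiInv t) = t :=
  Function.invFun_eq (Phi_surj ht)

lemma lt_Phi_iff {t : ℝ} (ht : t ∈ Set.Ioo (0:ℝ) 1) (u : ℝ) : t < Phi u ↔ PhiInv t < u := by
  conv_lhs => rw [← Phi_PhiInv ht]
  exact Phi_strictMono.lt_iff_lt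

lemma athr_iff (c ρ N R N0 R0 α : ℝ) (k : ℕ) (hρ : ρ ∈ Set.Ioo (0:ℝ) 1)
    (hR : R ∈ Set.Ico (0:ℝ) 1) (hN : 0 < N) (v : ℝ) :
    (α - k * N0 * (1 - R0) < N * (1 - R) * Phi ((c - Real.sqrt ρ * v) / Real.sqrt (1 - ρ))) ↔
      (v : EReal) < Athr c ρ N R N0 R0 α k := by
  have hD : 0 < N * (1 - R) := mul_pos hN (by linarith [hR.2])
  set u := (c - Real.sqrt ρ * v) / Real.sqrt (1 - ρ) with hu
  set t := (α - (k : ℝ) * N0 * (1 - R0)) / (N * (1 - R)) with ht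
  have hLHS : (α - (k:ℝ) * N0 * (1 - R0) < N * (1 - R) * Phi u) ↔ t < Phi u := by
    rw [ht, div_lt_iff₀ hD, mul_comm (Phi u)]
  rw [hLHS, Athr]
  split_ifs with h1 h2
  · have ht0 : t ≤ 0 := by
      by_contra h
      push_neg at h
      have : (0:ℝ) < min 1 t := lt_min one_pos h
      have := le_max_right (0:ℝ) (min 1 t)
      simp only [← ht] at h1
      linarith
    exact iff_of_true (lt_of_le_of_lt ht0 (Phi_pos u)) (EReal.coe_lt_top v)
  · have ht1 : 1 ≤ t := by
      rcases le_max_iff.mp h2 with h | h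
      · linarith
      · exact (le_min_iff.mp h).2
    exact iff_of_false (not_lt.mpr (by linarith [Phi_lt_one u])) not_lt_bot
  · push_neg at h1 h2
    have htpos : 0 < t := by
      by_contra h
      push_neg at h
      have hmin : min 1 t ≤ 0 := le_trans (min_le_right _ _) h
      rw [max_eq_left hmin] at h1
      exact lt_irrefl 0 h1
    have htlt : t < 1 := by
      by_contra h
      push_neg at h
      have : min 1 t = 1 := min_eq_left h
      rw [this] at h2
      simp at h2
    have hm : max 0 (min 1 t) = t := by
      rw [min_eq_right htlt.le, max_eq_right htpos.le]
    rw [hm, lt_Phi_iff ⟨htpos, htlt⟩, EReal.coe_lt_coe_iff]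
    have hs1 : 0 < Real.sqrt (1 - ρ) := Real.sqrt_pos.mpr (by linarith [hρ.2])
    have hs2 : 0 < Real.sqrt ρ := Real.sqrt_pos.mpr hρ.1
    rw [hu, lt_div_iff₀ hs1, lt_div_iff₀ hs2]
    constructor <;> intro h <;> nlinarith [h]

lemma joint_prob
    {Ω : Type*} [MeasureSpace Ω] [IsProbabilityMeasure (ℙ : Measure Ω)]
    (V ξ : Ω → ℝ) (hV : Measurable V) (hξ : Measurable ξ)
    (hVlaw : Measure.map V ℙ = gaussianReal 0 1)
    (hξlaw : Measure.map ξ ℙ = gaussianReal 0 1)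
    (hind : IndepFun V ξ ℙ)
    (ρ0 : ℝ) (hρ0 : ρ0 ∈ Set.Ioo (0:ℝ) 1) (c0 : ℝ)
    (S : Set ℝ) (hS : MeasurableSet S) :
    ℙ {ω | V ω ∈ S ∧ Real.sqrt ρ0 * V ω + Real.sqrt (1 - ρ0) * ξ ω ≤ c0}
      = ENNReal.ofReal (∫ v in S, Phi ((c0 - Real.sqrt ρ0 * v) / Real.sqrt (1 - ρ0))
          * gaussianPDFReal 0 1 v) := by
  set γ := gaussianReal 0 1 with hγ
  set g : ℝ → ℝ := fun v => (c0 - Real.sqrt ρ0 * v) / Real.sqrt (1 - ρ0) with hg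
  have hs1 : 0 < Real.sqrt (1 - ρ0) := Real.sqrt_pos.mpr (by linarith [hρ0.2])
  have hmap : Measure.map (fun ω => (V ω, ξ ω)) ℙ = γ.prod γ := by
    have hmm := (indepFun_iff_map_prod_eq_prod_map_map hV.aemeasurable hξ.aemeasurable).mp hind
    rw [hVlaw, hξlaw] at hmm
    exact hmm
  set T : Set (ℝ × ℝ) := {p | p.1 ∈ S ∧ Real.sqrt ρ0 * p.1 + Real.sqrt (1 - ρ0) * p.2 ≤ c0}
    with hTdef
  have hT : MeasurableSet T := by
    have hTeq : T = (Prod.fst ⁻¹' S) ∩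
        {p : ℝ × ℝ | Real.sqrt ρ0 * p.1 + Real.sqrt (1 - ρ0) * p.2 ≤ c0} := rfl
    rw [hTeq]
    exact (measurable_fst hS).inter (measurableSet_le (by fun_prop) measurable_const)
  have h1 : ℙ {ω | V ω ∈ S ∧ Real.sqrt ρ0 * V ω + Real.sqrt (1 - ρ0) * ξ ω ≤ c0}
      = (γ.prod γ) T := by
    rw [← hmap, Measure.map_apply (hV.prodMk hξ) hT]
    rfl
  have h2 : (γ.prod γ) T = ∫⁻ v, γ (Prod.mk v ⁻¹' T) ∂γ := Measure.prod_apply hT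
  have h3 : (fun v => γ (Prod.mk v ⁻¹' T))
      = fun v => S.indicator (fun v => ENNReal.ofReal (Phi (g v))) v := by
    funext v
    by_cases hv : v ∈ S
    · have : Prod.mk v ⁻¹' T = Set.Iic (g v) := by
        ext x
        simp only [hTdef, Set.mem_preimage, Set.mem_setOf_eq, Set.mem_Iic, hv, true_and, hg]
        rw [le_div_iff₀ hs1]
        constructor <;> intro h <;> nlinarith [h]
      rw [this, Set.indicator_of_mem hv, gaussian_Iic_eq]
    · have : Prod.mk v ⁻¹' T = ∅ := by
        ext x
        simp [hTdef, hv]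
      rw [this, Set.indicator_of_notMem hv]
      simp
  have hint : Integrable (fun v => Phi (g v)) (γ.restrict S) := by
    constructor
    · exact (Phi_continuous.comp (by fun_prop)).aestronglyMeasurable
    · apply HasFiniteIntegral.of_bounded (C := 1)
      exact ae_of_all _ fun v => by
        rw [Real.norm_eq_abs, abs_of_nonneg (Phi_nonneg _)]; exact Phi_le_one _
  have h4 : ∫⁻ v, γ (Prod.mk v ⁻¹' T) ∂γ = ENNReal.ofReal (∫ v in S, Phi (g v) ∂γ) := by
    rw [h3, lintegral_indicator hS _,
      ← ofReal_integral_eq_lintegral_ofReal hint (ae_of_all _ fun v => Phi_nonneg _)]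
  have h5 : ∫ v in S, Phi (g v) ∂γ = ∫ v in S, Phi (g v) * gaussianPDFReal 0 1 v := by
    rw [hγ, gaussianReal_of_var_ne_zero 0 one_ne_zero, restrict_withDensity hS]
    have hpdf : (gaussianPDF 0 1) = fun x => ((gaussianPDFReal 0 1 x).toNNReal : ℝ≥0∞) := by
      funext x
      rw [gaussianPDF]
      rfl
    rw [hpdf, integral_withDensity_eq_integral_smul
      (by exact (measurable_gaussianPDFReal 0 1).real_toNNReal) _]
    congr 1
    funext v
    rw [NNReal.smul_def, smul_eq_mul, Real.coe_toNNReal _ (gaussianPDFReal_nonneg 0 1 v), mul_comm]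
  rw [h1, h2, h4, h5]


lemma meas_le_set {Ω : Type*} [MeasurableSpace Ω] (V : Ω → ℝ) (hV : Measurable V) (A : EReal) :
    MeasurableSet {ω | (V ω : EReal) ≤ A} :=
  (measurable_coe_real_ereal.comp hV) measurableSet_Iic

lemma meas_lt_set {Ω : Type*} [MeasurableSpace Ω] (V : Ω → ℝ) (hV : Measurable V) (A : EReal) :
    MeasurableSet {ω | (V ω : EReal) < A} :=
  (measurable_coe_real_ereal.comp hV) measurableSet_Iio

lemma strict_nonstrict {Ω : Type*} [MeasureSpace Ω] [IsProbabilityMeasure (ℙ : Measure Ω)]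
    (V : Ω → ℝ) (hV : Measurable V) (hVlaw : Measure.map V ℙ = gaussianReal 0 1)
    (A : EReal) (T : Set Ω) :
    ℙ ({ω | (V ω : EReal) < A} ∩ T) = ℙ ({ω | (V ω : EReal) ≤ A} ∩ T) := by
  induction A with
  | bot =>
    have h1 : {ω | (V ω : EReal) < ⊥} = (∅ : Set Ω) := by ext ω; simp
    have h2 : {ω | (V ω : EReal) ≤ ⊥} = (∅ : Set Ω) := by ext ω; simp
    rw [h1, h2]
  | top =>
    have h1 : {ω | (V ω : EReal) < ⊤} = (Set.univ : Set Ω) := by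
      ext ω; simpa using EReal.coe_lt_top (V ω)
    have h2 : {ω | (V ω : EReal) ≤ ⊤} = (Set.univ : Set Ω) := by ext ω; simp
    rw [h1, h2]
  | coe r =>
    have hnull : ℙ (V ⁻¹' {r}) = 0 := by
      rw [← Measure.map_apply hV (measurableSet_singleton r), hVlaw]
      exact measure_singleton r
    apply le_antisymm
    · exact measure_mono (Set.inter_subset_inter_left T
        (fun ω hω => EReal.coe_le_coe_iff.mpr (le_of_lt (EReal.coe_lt_coe_iff.mp hω))))
    · have hsub : {ω | (V ω : EReal) ≤ (r : EReal)} ∩ T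
          ⊆ ({ω | (V ω : EReal) < (r : EReal)} ∩ T) ∪ V ⁻¹' {r} := by
        rintro ω ⟨h1, h2⟩
        rcases lt_or_eq_of_le (show V ω ≤ r by exact_mod_cast h1) with h | h
        · exact Or.inl ⟨by exact_mod_cast h, h2⟩
        · exact Or.inr h
      calc ℙ ({ω | (V ω : EReal) ≤ (r : EReal)} ∩ T)
          ≤ ℙ (({ω | (V ω : EReal) < (r : EReal)} ∩ T) ∪ V ⁻¹' {r}) := measure_mono hsub
        _ ≤ ℙ ({ω | (V ω : EReal) < (r : EReal)} ∩ T) + ℙ (V ⁻¹' {r}) := measure_union_le _ _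
        _ = ℙ ({ω | (V ω : EReal) < (r : EReal)} ∩ T) := by rw [hnull, add_zero]

lemma phiE_eq {Ω : Type*} [MeasureSpace Ω] [IsProbabilityMeasure (ℙ : Measure Ω)]
    (V : Ω → ℝ) (hV : Measurable V) (hVlaw : Measure.map V ℙ = gaussianReal 0 1)
    (A : EReal) : PhiE A = (ℙ {ω | (V ω : EReal) ≤ A}).toReal := by
  induction A with
  | bot =>
    have h2 : {ω | (V ω : EReal) ≤ ⊥} = (∅ : Set Ω) := by ext ω; simp
    rw [h2]
    simp [PhiE]
  | top =>
    have h2 : {ω | (V ω : EReal) ≤ ⊤} = (Set.univ : Set Ω) := by ext ω; simp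
    rw [h2]
    simp [PhiE]
  | coe r =>
    have h2 : {ω | (V ω : EReal) ≤ (r : EReal)} = V ⁻¹' Set.Iic r := by
      ext ω; simp [EReal.coe_le_coe_iff]
    rw [h2, ← Measure.map_apply hV measurableSet_Iic, hVlaw]
    simp only [PhiE, EReal.coe_ne_top, EReal.coe_ne_bot, if_false, EReal.toReal_coe]
    rfl


/-- **LH+ model, `n = 1` case of Proposition 1.** With a single large loan,
`P(L > α) = Φ(A(α,0)) − P(V ≤ A(α,0), X₁ ≤ c₀) + P(V ≤ A(α,1), X₁ ≤ c₀)`, where the joint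
probabilities equal the bivariate standard normal distribution function with correlation
`√ρ₀` evaluated at the respective arguments. -/
theorem lhplus_loss_exceedance_prob
    {Ω : Type*} [MeasureSpace Ω] [IsProbabilityMeasure (ℙ : Measure Ω)]
    (V ε ξ : Ω → ℝ) (hV : Measurable V) (hε : Measurable ε) (hξ : Measurable ξ)
    (hVlaw : Measure.map V ℙ = gaussianReal 0 1)
    (hεlaw : Measure.map ε ℙ = gaussianReal 0 1)
    (hξlaw : Measure.map ξ ℙ = gaussianReal 0 1)
    (hindep : iIndepFun ![V, ε, ξ] ℙ)
    (ρ ρ0 : ℝ) (hρ : ρ ∈ Set.Ioo (0 : ℝ) 1) (hρ0 : ρ0 ∈ Set.Ioo (0 : ℝ) 1)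
    (c c0 : ℝ) (R R0 : ℝ) (hR : R ∈ Set.Ico (0 : ℝ) 1) (hR0 : R0 ∈ Set.Ico (0 : ℝ) 1)
    (N N0 : ℝ) (hN : 0 < N) (hN0 : 0 < N0) (hsum : N + N0 = 1)
    (X1 : Ω → ℝ)
    (hX1 : X1 = fun ω => Real.sqrt ρ0 * V ω + Real.sqrt (1 - ρ0) * ξ ω)
    (L : Ω → ℝ)
    (hL : L = fun ω =>
      N0 * (1 - R0) * Set.indicator {ω' | X1 ω' ≤ c0} (fun _ => (1 : ℝ)) ω
        + N * (1 - R) * Phi ((c - Real.sqrt ρ * V ω) / Real.sqrt (1 - ρ)))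
    (α : ℝ) :
    (ℙ {ω | α < L ω}).toReal
      = PhiE (Athr c ρ N R N0 R0 α 0)
        - (ℙ {ω | (V ω : EReal) ≤ Athr c ρ N R N0 R0 α 0 ∧ X1 ω ≤ c0}).toReal
        + (ℙ {ω | (V ω : EReal) ≤ Athr c ρ N R N0 R0 α 1 ∧ X1 ω ≤ c0}).toReal
      ∧ ∀ k : Fin 2,
          (ℙ {ω | (V ω : EReal) ≤ Athr c ρ N R N0 R0 α k ∧ X1 ω ≤ c0}).toReal
            = Phi2 (Athr c ρ N R N0 R0 α k) c0 (Real.sqrt ρ0) := by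
  subst hX1 hL
  have hind : IndepFun V ξ ℙ := by
    have h := hindep.indepFun (show (0 : Fin 3) ≠ 2 by decide)
    simpa using h
  have hSmeas : MeasurableSet {ω | Real.sqrt ρ0 * V ω + Real.sqrt (1 - ρ0) * ξ ω ≤ c0} :=
    measurableSet_le (by fun_prop) measurable_const
  have part2 : ∀ A : EReal,
      (ℙ {ω | (V ω : EReal) ≤ A
        ∧ (fun ω => Real.sqrt ρ0 * V ω + Real.sqrt (1 - ρ0) * ξ ω) ω ≤ c0}).toReal
        = Phi2 A c0 (Real.sqrt ρ0) := by
    intro A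
    have hSA : MeasurableSet {v : ℝ | (v : EReal) ≤ A} :=
      measurable_coe_real_ereal measurableSet_Iic
    have hpos : 0 ≤ ∫ v in {v : ℝ | (v : EReal) ≤ A},
        Phi ((c0 - Real.sqrt ρ0 * v) / Real.sqrt (1 - ρ0)) * gaussianPDFReal 0 1 v :=
      setIntegral_nonneg hSA fun v _ =>
        mul_nonneg (Phi_nonneg _) (gaussianPDFReal_nonneg 0 1 v)
    have hset : {ω | (V ω : EReal) ≤ A
        ∧ (fun ω => Real.sqrt ρ0 * V ω + Real.sqrt (1 - ρ0) * ξ ω) ω ≤ c0}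
        = {ω | V ω ∈ {v : ℝ | (v : EReal) ≤ A}
            ∧ Real.sqrt ρ0 * V ω + Real.sqrt (1 - ρ0) * ξ ω ≤ c0} := rfl
    rw [hset, joint_prob V ξ hV hξ hVlaw hξlaw hind ρ0 hρ0 c0 _ hSA,
      ENNReal.toReal_ofReal hpos, Phi2, Real.sq_sqrt hρ0.1.le]
  refine ⟨?_, fun k => part2 _⟩
  set A0 := Athr c ρ N R N0 R0 α 0 with hA0def
  set A1 := Athr c ρ N R N0 R0 α 1 with hA1def
  set S : Set Ω := {ω | Real.sqrt ρ0 * V ω + Real.sqrt (1 - ρ0) * ξ ω ≤ c0} with hSdef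
  have hevent : {ω | α < (fun ω =>
        N0 * (1 - R0) * Set.indicator {ω' | (fun ω => Real.sqrt ρ0 * V ω
            + Real.sqrt (1 - ρ0) * ξ ω) ω' ≤ c0} (fun _ => (1 : ℝ)) ω
          + N * (1 - R) * Phi ((c - Real.sqrt ρ * V ω) / Real.sqrt (1 - ρ))) ω}
      = ({ω | (V ω : EReal) < A0} ∩ Sᶜ) ∪ ({ω | (V ω : EReal) < A1} ∩ S) := by
    ext ω
    simp only [Set.mem_setOf_eq, Set.mem_union, Set.mem_inter_iff, Set.mem_compl_iff]
    by_cases hω : ω ∈ S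
    · rw [Set.indicator_of_mem hω]
      have h1 := athr_iff c ρ N R N0 R0 α 1 hρ hR hN (V ω)
      simp only [Nat.cast_one, one_mul] at h1
      simp only [hω, not_true, and_false, false_or, and_true]
      rw [← hA1def] at h1
      rw [← h1]
      constructor <;> intro h <;> linarith
    · rw [Set.indicator_of_notMem hω]
      have h0 := athr_iff c ρ N R N0 R0 α 0 hρ hR hN (V ω)
      simp only [Nat.cast_zero, zero_mul, sub_zero] at h0
      simp only [hω, not_false_iff, and_true, and_false, or_false]
      rw [← hA0def] at h0
      rw [← h0]
      constructor <;> intro h <;> linarith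
  have hdisj : Disjoint ({ω | (V ω : EReal) < A0} ∩ Sᶜ) ({ω | (V ω : EReal) < A1} ∩ S) :=
    Set.disjoint_left.mpr (fun ω h1 h2 => h1.2 h2.2)
  have hm1 : ℙ ({ω | (V ω : EReal) < A0} ∩ Sᶜ) + ℙ ({ω | (V ω : EReal) < A1} ∩ S)
      = ℙ ({ω | (V ω : EReal) < A0} ∩ Sᶜ) + ℙ ({ω | (V ω : EReal) < A1} ∩ S) := rfl
  have hunion : ℙ (({ω | (V ω : EReal) < A0} ∩ Sᶜ) ∪ ({ω | (V ω : EReal) < A1} ∩ S))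
      = ℙ ({ω | (V ω : EReal) < A0} ∩ Sᶜ) + ℙ ({ω | (V ω : EReal) < A1} ∩ S) :=
    measure_union hdisj ((meas_lt_set V hV A1).inter hSmeas)
  have e0 : ℙ ({ω | (V ω : EReal) < A0} ∩ Sᶜ) = ℙ ({ω | (V ω : EReal) ≤ A0} ∩ Sᶜ) :=
    strict_nonstrict V hV hVlaw A0 Sᶜ
  have e1 : ℙ ({ω | (V ω : EReal) < A1} ∩ S) = ℙ ({ω | (V ω : EReal) ≤ A1} ∩ S) :=
    strict_nonstrict V hV hVlaw A1 S
  have htotal : ℙ ({ω | (V ω : EReal) ≤ A0} ∩ S) + ℙ ({ω | (V ω : EReal) ≤ A0} ∩ Sᶜ)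
      = ℙ {ω | (V ω : EReal) ≤ A0} := by
    have := measure_inter_add_diff (μ := ℙ) {ω | (V ω : EReal) ≤ A0} hSmeas
    rwa [Set.diff_eq] at this
  have hPhiE : PhiE A0 = (ℙ {ω | (V ω : EReal) ≤ A0}).toReal := phiE_eq V hV hVlaw A0
  have hsets0 : {ω | (V ω : EReal) ≤ A0
      ∧ (fun ω => Real.sqrt ρ0 * V ω + Real.sqrt (1 - ρ0) * ξ ω) ω ≤ c0}
      = {ω | (V ω : EReal) ≤ A0} ∩ S := rfl
  have hsets1 : {ω | (V ω : EReal) ≤ A1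
      ∧ (fun ω => Real.sqrt ρ0 * V ω + Real.sqrt (1 - ρ0) * ξ ω) ω ≤ c0}
      = {ω | (V ω : EReal) ≤ A1} ∩ S := rfl
  rw [hevent, hunion, hsets0, hsets1, e0, e1, hPhiE]
  rw [ENNReal.toReal_add (measure_ne_top _ _) (measure_ne_top _ _), ← htotal,
    ENNReal.toReal_add (measure_ne_top _ _) (measure_ne_top _ _)]
  ring
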